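/- For fixed Δ, write the per-period cost as G(S_f) = h E[(S_f - X)^+] + p E[(X - S_f)^+] + c_f E[Q_f(Δ)] + c_s E[Q_s(Δ)] with X = Σ_{i=1}^{l_f+1} D_i - O(Δ). If the distributions of O(Δ), Q_f, and Q_s do not depend on S_f, then minimizing the total cost over (S_f, Δ) decomposes: for each Δ, the inner minimization over S_f is a Newsvendor problem whose optimal value is h E[(S_f*(Δ) - X)^+] + p E[(X - S_f*(Δ))^+] plus the Δ-dependent ordering costs, where S_f*(Δ) is the p/(p+h)-quantile of X. -/

import Mathlib

open MeasureTheory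

section NewsvendorAux
open ProbabilityTheory Filter Set Topology


lemma newsvendor_real (ν : Measure ℝ) [IsProbabilityMeasure ν]
    (h p : ℝ) (hh : 0 < h) (hp : 0 < p)
    (hint : Integrable (fun x : ℝ => x) ν)
    (S Sst : ℝ)
    (hSst : Sst = sInf {S : ℝ | p / (p + h) ≤ (ν (Iic S)).toReal}) :
    ∫ x, (h * max (Sst - x) 0 + p * max (x - Sst) 0) ∂ν ≤
      ∫ x, (h * max (S - x) 0 + p * max (x - S) 0) ∂ν := by
  set q : ℝ := p / (p + h) with hq
  have hph : 0 < p + h := by linarith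
  have hq0 : 0 < q := div_pos hp hph
  have hq1 : q < 1 := (div_lt_one hph).mpr (by linarith)
  have hcdf : ∀ x : ℝ, cdf ν x = (ν (Iic x)).toReal := fun x => cdf_eq_real ν x
  set A : Set ℝ := {S : ℝ | q ≤ cdf ν S} with hA
  have hAset : {S : ℝ | q ≤ (ν (Iic S)).toReal} = A := by
    ext x; simp [hA, hcdf]
  rw [hAset] at hSst
  -- A is nonempty
  have hAne : A.Nonempty := by
    have := (tendsto_cdf_atTop ν).eventually_const_le hq1
    exact this.exists
  -- A is bounded below
  obtain ⟨S0, hS0⟩ : ∃ S0 : ℝ, cdf ν S0 < q :=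
    ((tendsto_cdf_atBot ν).eventually_lt_const hq0).exists
  have hbdd : BddBelow A := by
    refine ⟨S0, fun a ha => ?_⟩
    by_contra hcon
    push_neg at hcon
    exact absurd (le_trans ha (monotone_cdf ν hcon.le)) (not_le.mpr hS0)
  -- q ≤ cdf ν Sst
  have hFq : q ≤ cdf ν Sst := by
    have hseq : Tendsto (fun n : ℕ => Sst + 1 / (n + 1)) atTop (𝓝 Sst) := by
      have := (tendsto_const_nhds : Tendsto (fun _ : ℕ => Sst) atTop (𝓝 Sst)).add
        tendsto_one_div_add_atTop_nhds_zero_nat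
      rwa [add_zero] at this
    have hseq' : Tendsto (fun n : ℕ => Sst + 1 / (n + 1)) atTop (𝓝[Ici Sst] Sst) := by
      refine tendsto_nhdsWithin_iff.mpr ⟨hseq, Eventually.of_forall fun n => ?_⟩
      have : (0:ℝ) < 1 / (n + 1) := by positivity
      simp only [mem_Ici]; linarith
    have htends := ((cdf ν).right_continuous Sst).tendsto.comp hseq'
    refine ge_of_tendsto htends (Eventually.of_forall fun n => ?_)
    have hpos : (0:ℝ) < 1 / (n + 1) := by positivity
    have hlt : sInf A < Sst + 1 / (n + 1) := by rw [← hSst]; linarith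
    obtain ⟨a, haA, halt⟩ := (csInf_lt_iff hbdd hAne).mp hlt
    exact le_trans haA (monotone_cdf ν halt.le)
  -- ν (Iio Sst) ≤ q
  have hFm : (ν (Iio Sst)).toReal ≤ q := by
    have hU : Iio Sst = ⋃ n : ℕ, Iic (Sst - 1 / (n + 1)) := by
      ext x
      simp only [mem_Iio, mem_iUnion, mem_Iic]
      constructor
      · intro hx
        obtain ⟨n, hn⟩ := exists_nat_one_div_lt (sub_pos.mpr hx)
        exact ⟨n, by linarith⟩
      · rintro ⟨n, hn⟩
        have : (0:ℝ) < 1 / (n + 1) := by positivity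
        linarith
    have hmono : Monotone (fun n : ℕ => Iic (Sst - 1 / ((n:ℝ) + 1))) := by
      intro m n hmn
      apply Iic_subset_Iic.mpr
      have hc : ((m:ℝ) + 1) ≤ (n:ℝ) + 1 := by exact_mod_cast Nat.succ_le_succ hmn
      have : 1 / ((n:ℝ) + 1) ≤ 1 / ((m:ℝ) + 1) :=
        one_div_le_one_div_of_le (by positivity) hc
      linarith
    have htends := tendsto_measure_iUnion_atTop (μ := ν) hmono
    rw [← hU] at htends
    have hle : ∀ n : ℕ, ν (Iic (Sst - 1 / (n + 1))) ≤ ENNReal.ofReal q := by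
      intro n
      have hpos : (0:ℝ) < 1 / (n + 1) := by positivity
      have hnot : Sst - 1 / (n + 1) ∉ A := by
        intro hmem
        have := csInf_le hbdd hmem
        rw [← hSst] at this
        linarith
      have hlt : (ν (Iic (Sst - 1 / (n + 1)))).toReal < q := by
        have hlt2 : ¬ q ≤ cdf ν (Sst - 1 / (n + 1)) := by simpa [hA] using hnot
        rw [← hcdf]
        exact not_le.mp hlt2
      exact (ENNReal.le_ofReal_iff_toReal_le (measure_ne_top ν _) hq0.le).mpr hlt.le
    have : ν (Iio Sst) ≤ ENNReal.ofReal q :=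
      le_of_tendsto htends (Eventually.of_forall hle)
    exact ENNReal.toReal_le_of_le_ofReal hq0.le this
  -- integrability of the newsvendor cost
  have hintS : ∀ c : ℝ, Integrable (fun x => h * max (c - x) 0 + p * max (x - c) 0) ν := by
    intro c
    have h1 : Integrable (fun x : ℝ => max (c - x) 0) ν := by
      have := ((integrable_const c).sub hint).sup (integrable_const (0:ℝ))
      exact this
    have h2 : Integrable (fun x : ℝ => max (x - c) 0) ν := by
      have := (hint.sub (integrable_const c)).sup (integrable_const (0:ℝ))
      exact this
    exact (h1.const_mul h).add (h2.const_mul p)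
  rcases le_or_gt Sst S with hle | hlt
  · -- case Sst ≤ S
    set b : ℝ → ℝ := fun x =>
      (Iic Sst).indicator (fun _ => (h + p) * (S - Sst)) x + (-p * (S - Sst)) with hb
    have hb_int : Integrable b ν :=
      (((integrable_const _).indicator measurableSet_Iic)).add (integrable_const _)
    have hpt : ∀ x, b x ≤ (h * max (S - x) 0 + p * max (x - S) 0)
        - (h * max (Sst - x) 0 + p * max (x - Sst) 0) := by
      intro x
      by_cases hx : x ≤ Sst
      · rw [hb]
        simp only [indicator_of_mem (mem_Iic.mpr hx)]
        rw [max_eq_left (by linarith : (0:ℝ) ≤ S - x), max_eq_right (by linarith : x - S ≤ 0),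
          max_eq_left (by linarith : (0:ℝ) ≤ Sst - x), max_eq_right (by linarith : x - Sst ≤ 0)]
        nlinarith
      · push_neg at hx
        rw [hb]
        simp only [indicator_of_notMem (by simpa using not_le_of_gt hx : x ∉ Iic Sst), zero_add]
        rcases le_or_gt x S with h2 | h2
        · rw [max_eq_left (by linarith : (0:ℝ) ≤ S - x), max_eq_right (by linarith : x - S ≤ 0),
            max_eq_right (by linarith : Sst - x ≤ 0), max_eq_left (by linarith : (0:ℝ) ≤ x - Sst)]
          nlinarith [mul_nonneg hh.le (by linarith : (0:ℝ) ≤ S - x),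
            mul_nonneg hp.le (by linarith : (0:ℝ) ≤ S - x)]
        · rw [max_eq_right (by linarith : S - x ≤ 0), max_eq_left (by linarith : (0:ℝ) ≤ x - S),
            max_eq_right (by linarith : Sst - x ≤ 0), max_eq_left (by linarith : (0:ℝ) ≤ x - Sst)]
          nlinarith
    have hib : ∫ x, b x ∂ν
        = (ν (Iic Sst)).toReal * ((h + p) * (S - Sst)) + (-p * (S - Sst)) := by
      rw [hb, integral_add ((integrable_const _).indicator measurableSet_Iic) (integrable_const _),
        integral_indicator_const _ measurableSet_Iic, integral_const]
      simp [smul_eq_mul, mul_comm, measureReal_def]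
    have hFq' : q ≤ (ν (Iic Sst)).toReal := by rwa [hcdf] at hFq
    have hkey : p ≤ (ν (Iic Sst)).toReal * (p + h) := by
      rwa [hq, div_le_iff₀ hph] at hFq'
    have hb_nonneg : 0 ≤ ∫ x, b x ∂ν := by
      rw [hib]
      nlinarith [mul_nonneg (sub_nonneg.mpr hle) (by linarith : 0 ≤ (ν (Iic Sst)).toReal * (p + h) - p)]
    have hmono := integral_mono hb_int ((hintS S).sub (hintS Sst)) hpt
    simp only [Pi.sub_apply] at hmono
    rw [integral_sub (hintS S) (hintS Sst)] at hmono
    linarith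
  · -- case S < Sst
    set b : ℝ → ℝ := fun x =>
      (Iio Sst).indicator (fun _ => -(h + p) * (Sst - S)) x + (p * (Sst - S)) with hb
    have hb_int : Integrable b ν :=
      (((integrable_const _).indicator measurableSet_Iio)).add (integrable_const _)
    have hpt : ∀ x, b x ≤ (h * max (S - x) 0 + p * max (x - S) 0)
        - (h * max (Sst - x) 0 + p * max (x - Sst) 0) := by
      intro x
      by_cases hx : x < Sst
      · rw [hb]
        simp only [indicator_of_mem (mem_Iio.mpr hx)]
        rcases le_or_gt x S with h2 | h2
        · rw [max_eq_left (by linarith : (0:ℝ) ≤ S - x), max_eq_right (by linarith : x - S ≤ 0),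
            max_eq_left (by linarith : (0:ℝ) ≤ Sst - x), max_eq_right (by linarith : x - Sst ≤ 0)]
          nlinarith
        · rw [max_eq_right (by linarith : S - x ≤ 0), max_eq_left (by linarith : (0:ℝ) ≤ x - S),
            max_eq_left (by linarith : (0:ℝ) ≤ Sst - x), max_eq_right (by linarith : x - Sst ≤ 0)]
          nlinarith [mul_nonneg hp.le (by linarith : (0:ℝ) ≤ x - S),
            mul_nonneg hh.le (by linarith : (0:ℝ) ≤ x - S)]
      · push_neg at hx
        rw [hb]
        simp only [indicator_of_notMem (by simpa using not_lt_of_ge hx : x ∉ Iio Sst), zero_add]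
        rw [max_eq_right (by linarith : S - x ≤ 0), max_eq_left (by linarith : (0:ℝ) ≤ x - S),
          max_eq_right (by linarith : Sst - x ≤ 0), max_eq_left (by linarith : (0:ℝ) ≤ x - Sst)]
        nlinarith
    have hib : ∫ x, b x ∂ν
        = (ν (Iio Sst)).toReal * (-(h + p) * (Sst - S)) + (p * (Sst - S)) := by
      rw [hb, integral_add ((integrable_const _).indicator measurableSet_Iio) (integrable_const _),
        integral_indicator_const _ measurableSet_Iio, integral_const]
      simp [smul_eq_mul, mul_comm, measureReal_def]
    have hkey : (ν (Iio Sst)).toReal * (p + h) ≤ p := by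
      rwa [hq, le_div_iff₀ hph] at hFm
    have hb_nonneg : 0 ≤ ∫ x, b x ∂ν := by
      rw [hib]
      nlinarith [mul_nonneg (sub_nonneg.mpr hlt.le)
        (by linarith : 0 ≤ p - (ν (Iio Sst)).toReal * (p + h))]
    have hmono := integral_mono hb_int ((hintS S).sub (hintS Sst)) hpt
    simp only [Pi.sub_apply] at hmono
    rw [integral_sub (hintS S) (hintS Sst)] at hmono
    linarith

lemma newsvendor_omega {Ω : Type*} [MeasurableSpace Ω] (μ : Measure Ω)
    [IsProbabilityMeasure μ] (h p : ℝ) (hh : 0 < h) (hp : 0 < p)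
    (X : Ω → ℝ) (hX : Integrable X μ) (S Sst : ℝ)
    (hSst : Sst = sInf {S : ℝ | p / (p + h) ≤ (μ {ω | X ω ≤ S}).toReal}) :
    ∫ ω, (h * max (Sst - X ω) 0 + p * max (X ω - Sst) 0) ∂μ ≤
      ∫ ω, (h * max (S - X ω) 0 + p * max (X ω - S) 0) ∂μ := by
  have hXm : AEMeasurable X μ := hX.aemeasurable
  set ν : Measure ℝ := μ.map X with hν
  haveI : IsProbabilityMeasure ν := Measure.isProbabilityMeasure_map hXm
  have hset : ∀ c : ℝ, μ {ω | X ω ≤ c} = ν (Iic c) := fun c =>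
    (Measure.map_apply_of_aemeasurable hXm measurableSet_Iic).symm
  have hint : Integrable (fun x : ℝ => x) ν := by
    have h1 : Integrable (id : ℝ → ℝ) ν :=
      (integrable_map_measure aestronglyMeasurable_id hXm).mpr
        (by simpa [Function.comp] using hX)
    exact h1
  have hmeas : ∀ c : ℝ, Continuous (fun x : ℝ => h * max (c - x) 0 + p * max (x - c) 0) := by
    intro c
    fun_prop
  have hInt : ∀ c : ℝ, ∫ x, (h * max (c - x) 0 + p * max (x - c) 0) ∂ν
      = ∫ ω, (h * max (c - X ω) 0 + p * max (X ω - c) 0) ∂μ := fun c =>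
    integral_map hXm ((hmeas c).aestronglyMeasurable)
  rw [← hInt S, ← hInt Sst]
  apply newsvendor_real ν h p hh hp hint S Sst
  rw [hSst]
  congr 1
  ext c
  simp only [mem_setOf_eq, hset]

lemma iInf_prod_reduce (s : ℝ → ℝ) (f : ℝ × ℝ → ℝ)
    (hmin : ∀ q : ℝ × ℝ, f (q.1, s q.1) ≤ f q) :
    (⨅ q : ℝ × ℝ, f q) = ⨅ Δ : ℝ, f (Δ, s Δ) := by
  by_cases hbdd : BddBelow (range fun Δ : ℝ => f (Δ, s Δ))
  · have hbddf : BddBelow (range f) := by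
      obtain ⟨b, hb⟩ := hbdd
      refine ⟨b, ?_⟩
      rintro x ⟨qq, rfl⟩
      exact le_trans (hb ⟨qq.1, rfl⟩) (hmin qq)
    apply le_antisymm
    · exact le_ciInf fun Δ => ciInf_le hbddf (Δ, s Δ)
    · exact le_ciInf fun qq => le_trans (ciInf_le hbdd qq.1) (hmin qq)
  · have hbddf : ¬ BddBelow (range f) := by
      intro ⟨b, hb⟩
      exact hbdd ⟨b, by rintro x ⟨Δ, rfl⟩; exact hb ⟨(Δ, s Δ), rfl⟩⟩
    rw [Real.iInf_of_not_bddBelow hbddf, Real.iInf_of_not_bddBelow hbdd]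


end NewsvendorAux

/-- Separability + Newsvendor decomposition: with
`G Δ S = E[h (S - X Δ)⁺ + p (X Δ - S)⁺]` and total cost
`T Δ S = G Δ S + c_f E[Q_f](Δ) + c_s E[Q_s](Δ)`, where the laws of
`X Δ = ∑ D_i - O(Δ)`, `Q_f(Δ)`, `Q_s(Δ)` do not depend on `S_f`, the inner
minimization over `S_f` for fixed `Δ` is a newsvendor problem solved by the
`p/(p+h)`-quantile `S*(Δ)` of `X Δ`, and the joint minimization reduces to a
one-dimensional search over `Δ`. -/
theorem dual_index_decomposition
    {Ω : Type*} [MeasurableSpace Ω] (μ : Measure Ω) [IsProbabilityMeasure μ]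
    (h p cf cs : ℝ) (hh : 0 < h) (hp : 0 < p) (hcf : 0 ≤ cf) (hcs : 0 ≤ cs)
    (X : ℝ → Ω → ℝ) (hXint : ∀ Δ, Integrable (X Δ) μ)
    (EQf EQs : ℝ → ℝ)
    (G : ℝ → ℝ → ℝ)
    (hG : G = fun Δ S =>
      ∫ ω, (h * max (S - X Δ ω) 0 + p * max (X Δ ω - S) 0) ∂μ)
    (T : ℝ → ℝ → ℝ)
    (hT : T = fun Δ S => G Δ S + cf * EQf Δ + cs * EQs Δ)
    (Sstar : ℝ → ℝ)
    (hSstar : ∀ Δ, Sstar Δ =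
      sInf {S : ℝ | p / (p + h) ≤ (μ {ω | X Δ ω ≤ S}).toReal}) :
    (∀ Δ S : ℝ, T Δ (Sstar Δ) ≤ T Δ S) ∧
    (⨅ q : ℝ × ℝ, T q.1 q.2) = ⨅ Δ : ℝ, T Δ (Sstar Δ) := by
  have part1 : ∀ Δ S : ℝ, T Δ (Sstar Δ) ≤ T Δ S := by
    intro Δ S
    subst hT hG
    simp only
    have := newsvendor_omega μ h p hh hp (X Δ) (hXint Δ) S (Sstar Δ) (hSstar Δ)
    linarith
  refine ⟨part1, ?_⟩
  exact iInf_prod_reduce Sstar (fun q => T q.1 q.2) fun q => part1 q.1 q.2
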